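/- Fix ρ>0. Let (x*,y*,z*) with y* = |h(x*)| and z* = max{0,−g(x*)} be a KKT point of (R_ρ) with multipliers (u*,v*,s*,t*), and define the active sets I_h* = {i : h_i(x*)=0} and I_g* = {i : g_i(x*)=0}. If x* is a local minimizer of the ℓ₁ constraint violation c, then x* is a KKT point of the equality-constrained problem: minimize f(x) subject to h_i(x)=0 for i ∈ I_h* and g_i(x)=0 for i ∈ I_g*; that is, there exist scalars μ̂_i for i ∈ I_h* and λ̂_i for i ∈ I_g* such that ∇f(x*) − Σ_{i∈I_h*} μ̂_i ∇h_i(x*) − Σ_{i∈I_g*} λ̂_i ∇g_i(x*) = 0. -/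

import Mathlib

open RealInnerProductSpace


section Helpers
open Asymptotics

private lemma absDerivZero {a : ℝ → ℝ} (ha : HasDerivAt a 0 0) (h0 : a 0 = 0) :
    HasDerivAt (fun t => |a t|) 0 0 := by
  rw [hasDerivAt_iff_isLittleO] at ha ⊢
  simp only [h0, sub_zero, zero_smul, smul_zero, abs_zero] at ha ⊢
  calc (fun t : ℝ => |a t|) =O[nhds 0] a := isBigO_of_le _ (fun x => by simp [abs_abs])
    _ =o[nhds 0] _ := ha

private lemma maxDerivZero {b : ℝ → ℝ} (hb : HasDerivAt b 0 0) (h0 : b 0 = 0) :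
    HasDerivAt (fun t => max 0 (-(b t))) 0 0 := by
  rw [hasDerivAt_iff_isLittleO] at hb ⊢
  simp only [h0, sub_zero, zero_smul, smul_zero, neg_zero, max_self] at hb ⊢
  calc (fun t : ℝ => max 0 (-(b t))) =O[nhds 0] b := by
        apply isBigO_of_le _ (fun x => ?_)
        rw [Real.norm_eq_abs, Real.norm_eq_abs, abs_le]
        constructor
        · calc -|b x| ≤ 0 := neg_nonpos.mpr (abs_nonneg _)
            _ ≤ max 0 (-(b x)) := le_max_left _ _
        · exact max_le (abs_nonneg _) (neg_le_abs _)
    _ =o[nhds 0] _ := hb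

private lemma lineDeriv' {n : ℕ} (f : EuclideanSpace ℝ (Fin n) → ℝ) (hf : ContDiff ℝ 1 f)
    (xs d : EuclideanSpace ℝ (Fin n)) :
    HasDerivAt (fun t : ℝ => f (xs + t • d)) ⟪gradient f xs, d⟫ 0 := by
  have hL : HasDerivAt (fun t : ℝ => xs + t • d) d 0 := by
    simpa using ((hasDerivAt_id (0:ℝ)).smul_const d).const_add xs
  have hdiff : DifferentiableAt ℝ f (xs + (0:ℝ) • d) := by
    simpa using (hf.differentiable one_ne_zero).differentiableAt (x := xs)
  have := (hdiff.hasGradientAt.hasFDerivAt).comp_hasDerivAt 0 hL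
  simp only [zero_smul, add_zero] at this
  simpa [InnerProductSpace.toDual_apply_apply, Function.comp_def] using this

end Helpers


set_option maxHeartbeats 1000000 in
/-- If `(x*, |h(x*)|, max{0,−g(x*)})` is a KKT point of (R_ρ) with
multipliers `(u*,v*,s*,t*)` and `x*` is a local minimizer of the ℓ₁ constraint
violation `c`, then `x*` is a KKT point of the equality constrained problem
`min f(x) s.t. h_i(x)=0 (i ∈ I_h*), g_i(x)=0 (i ∈ I_g*)`: there are multipliers
(extended by `0` outside the active sets) such that
`∇f(x*) − Σ_{i∈I_h*} μ̂_i ∇h_i(x*) − Σ_{i∈I_g*} λ̂_i ∇g_i(x*) = 0`. -/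
theorem stmt7 {n mE mI : ℕ}
    (f : EuclideanSpace ℝ (Fin n) → ℝ)
    (h : Fin mE → EuclideanSpace ℝ (Fin n) → ℝ)
    (g : Fin mI → EuclideanSpace ℝ (Fin n) → ℝ)
    (hf : ContDiff ℝ 1 f) (hh : ∀ i, ContDiff ℝ 1 (h i)) (hg : ∀ i, ContDiff ℝ 1 (g i))
    (ρ : ℝ) (hρ : 0 < ρ)
    (xs : EuclideanSpace ℝ (Fin n))
    (u v : Fin mE → ℝ) (s t : Fin mI → ℝ)
    -- KKT conditions of (R_ρ) at (x*, |h(x*)|, max{0,−g(x*)}) with (u*,v*,s*,t*)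
    (hu : ∀ i, 0 ≤ u i) (hv : ∀ i, 0 ≤ v i) (hs : ∀ i, 0 ≤ s i) (ht : ∀ i, 0 ≤ t i)
    (hstat : ρ • gradient f xs + (∑ i, (u i - v i) • gradient (h i) xs)
        - (∑ i, s i • gradient (g i) xs) = 0)
    (huv : ∀ i, 1 - u i - v i = 0) (hst : ∀ i, 1 - s i - t i = 0)
    (hcu : ∑ i, u i * (|h i xs| - h i xs) = 0)
    (hcv : ∑ i, v i * (|h i xs| + h i xs) = 0)
    (hcs : ∑ i, s i * (max 0 (-(g i xs)) + g i xs) = 0)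
    (hct : ∑ i, t i * max 0 (-(g i xs)) = 0)
    -- x* is a local minimizer of the ℓ₁ constraint violation
    (hmin : IsLocalMin (fun x => (∑ i, |h i x|) + ∑ i, max 0 (-(g i x))) xs) :
    ∃ (μh : Fin mE → ℝ) (dl : Fin mI → ℝ),
      (∀ i, h i xs ≠ 0 → μh i = 0) ∧
      (∀ i, g i xs ≠ 0 → dl i = 0) ∧
      gradient f xs - (∑ i, μh i • gradient (h i) xs)
        - (∑ i, dl i • gradient (g i) xs) = 0 := by
  classical
  -- pointwise complementarity
  have hcu' : ∀ i, u i * (|h i xs| - h i xs) = 0 := fun i =>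
    (Finset.sum_eq_zero_iff_of_nonneg fun j _ =>
      mul_nonneg (hu j) (sub_nonneg.mpr (le_abs_self _))).mp hcu i (Finset.mem_univ i)
  have hcv' : ∀ i, v i * (|h i xs| + h i xs) = 0 := fun i =>
    (Finset.sum_eq_zero_iff_of_nonneg fun j _ =>
      mul_nonneg (hv j) (by linarith [neg_abs_le (h j xs)])).mp hcv i (Finset.mem_univ i)
  have hcs' : ∀ i, s i * (max 0 (-(g i xs)) + g i xs) = 0 := fun i =>
    (Finset.sum_eq_zero_iff_of_nonneg fun j _ =>
      mul_nonneg (hs j) (by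
        have := le_max_right (0:ℝ) (-(g j xs)); linarith)).mp hcs i (Finset.mem_univ i)
  have hct' : ∀ i, t i * max 0 (-(g i xs)) = 0 := fun i =>
    (Finset.sum_eq_zero_iff_of_nonneg fun j _ =>
      mul_nonneg (ht j) (le_max_left _ _)).mp hct i (Finset.mem_univ i)
  -- inactive multipliers
  have hEpos : ∀ i, 0 < h i xs → u i - v i = 1 := by
    intro i hi
    have h2 : 0 < |h i xs| + h i xs := by rw [abs_of_pos hi]; linarith
    rcases mul_eq_zero.mp (hcv' i) with h' | h'
    · have := huv i; linarith
    · linarith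
  have hEneg : ∀ i, h i xs < 0 → u i - v i = -1 := by
    intro i hi
    have h2 : 0 < |h i xs| - h i xs := by rw [abs_of_neg hi]; linarith
    rcases mul_eq_zero.mp (hcu' i) with h' | h'
    · have := huv i; linarith
    · linarith
  have hIpos : ∀ i, 0 < g i xs → s i = 0 := by
    intro i hi
    have hmax : max 0 (-(g i xs)) = 0 := max_eq_left (by linarith)
    have h2 := hcs' i
    rw [hmax, zero_add] at h2
    rcases mul_eq_zero.mp h2 with h' | h'
    · exact h'
    · linarith
  have hIneg : ∀ i, g i xs < 0 → s i = 1 := by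
    intro i hi
    have hmax : max 0 (-(g i xs)) = -(g i xs) := max_eq_right (by linarith)
    have h2 := hct' i
    rw [hmax] at h2
    rcases mul_eq_zero.mp h2 with h' | h'
    · have := hst i; linarith
    · linarith
  set a : Fin mE → ℝ := fun i => if h i xs = 0 then 0 else u i - v i with ha_def
  set b : Fin mI → ℝ := fun i => if g i xs = 0 then 0 else s i with hb_def
  -- the key orthogonality claim
  have claim : ∀ d : EuclideanSpace ℝ (Fin n),
      (∀ i, h i xs = 0 → ⟪gradient (h i) xs, d⟫ = 0) →
      (∀ i, g i xs = 0 → ⟪gradient (g i) xs, d⟫ = 0) →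
      (∑ i, a i * ⟪gradient (h i) xs, d⟫) - (∑ i, b i * ⟪gradient (g i) xs, d⟫) = 0 := by
    intro d hdh hdg
    set L : ℝ → EuclideanSpace ℝ (Fin n) := fun t => xs + t • d with hL_def
    have hterm1 : ∀ i : Fin mE,
        HasDerivAt (fun t => |h i (L t)|) (a i * ⟪gradient (h i) xs, d⟫) 0 := by
      intro i
      have hbase : HasDerivAt (fun t => h i (L t)) ⟪gradient (h i) xs, d⟫ 0 :=
        lineDeriv' (h i) (hh i) xs d
      rcases lt_trichotomy (h i xs) 0 with hc | hc | hc
      · have hev : ∀ᶠ t in nhds (0:ℝ), h i (L t) < 0 := by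
          have h0 : h i (L 0) < 0 := by simpa [hL_def] using hc
          exact hbase.continuousAt.eventually (eventually_lt_nhds h0)
        have hne : h i xs ≠ 0 := ne_of_lt hc
        have hval : a i = -1 := by rw [ha_def]; simp only [if_neg hne]; exact hEneg i hc
        have hd' : HasDerivAt (fun t => |h i (L t)|) (-⟪gradient (h i) xs, d⟫) 0 := by
          refine hbase.neg.congr_of_eventuallyEq ?_
          filter_upwards [hev] with t ht
          rw [abs_of_neg ht]
          rfl
        rw [hval]; simpa [neg_mul, one_mul] using hd'
      · have h0 : (fun t => h i (L t)) 0 = 0 := by simpa [hL_def] using hc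
        have hinner : ⟪gradient (h i) xs, d⟫ = 0 := hdh i hc
        have hval : a i = 0 := by rw [ha_def]; simp [hc]
        rw [hval, zero_mul]
        exact absDerivZero (by rwa [hinner] at hbase) h0
      · have hev : ∀ᶠ t in nhds (0:ℝ), 0 < h i (L t) := by
          have h0 : 0 < h i (L 0) := by simpa [hL_def] using hc
          exact hbase.continuousAt.eventually (eventually_gt_nhds h0)
        have hne : h i xs ≠ 0 := ne_of_gt hc
        have hval : a i = 1 := by rw [ha_def]; simp only [if_neg hne]; exact hEpos i hc
        have hd' : HasDerivAt (fun t => |h i (L t)|) ⟪gradient (h i) xs, d⟫ 0 := by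
          refine hbase.congr_of_eventuallyEq ?_
          filter_upwards [hev] with t ht
          rw [abs_of_pos ht]
        rw [hval, one_mul]; exact hd'
    have hterm2 : ∀ i : Fin mI,
        HasDerivAt (fun t => max 0 (-(g i (L t)))) (-(b i * ⟪gradient (g i) xs, d⟫)) 0 := by
      intro i
      have hbase : HasDerivAt (fun t => g i (L t)) ⟪gradient (g i) xs, d⟫ 0 :=
        lineDeriv' (g i) (hg i) xs d
      rcases lt_trichotomy (g i xs) 0 with hc | hc | hc
      · have hev : ∀ᶠ t in nhds (0:ℝ), g i (L t) < 0 := by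
          have h0 : g i (L 0) < 0 := by simpa [hL_def] using hc
          exact hbase.continuousAt.eventually (eventually_lt_nhds h0)
        have hne : g i xs ≠ 0 := ne_of_lt hc
        have hval : b i = 1 := by rw [hb_def]; simp only [if_neg hne]; exact hIneg i hc
        have hd' : HasDerivAt (fun t => max 0 (-(g i (L t)))) (-⟪gradient (g i) xs, d⟫) 0 := by
          refine hbase.neg.congr_of_eventuallyEq ?_
          filter_upwards [hev] with t ht
          rw [max_eq_right (by linarith : (0:ℝ) ≤ -(g i (L t)))]
          rfl
        rw [hval, one_mul]; exact hd'
      · have h0 : (fun t => g i (L t)) 0 = 0 := by simpa [hL_def] using hc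
        have hinner : ⟪gradient (g i) xs, d⟫ = 0 := hdg i hc
        rw [hinner, mul_zero, neg_zero]
        exact maxDerivZero (by rwa [hinner] at hbase) h0
      · have hev : ∀ᶠ t in nhds (0:ℝ), 0 < g i (L t) := by
          have h0 : 0 < g i (L 0) := by simpa [hL_def] using hc
          exact hbase.continuousAt.eventually (eventually_gt_nhds h0)
        have hne : g i xs ≠ 0 := ne_of_gt hc
        have hval : b i = 0 := by
          rw [hb_def]; simp only [if_neg hne]; exact hIpos i hc
        have hd' : HasDerivAt (fun t => max 0 (-(g i (L t)))) 0 0 := by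
          refine (hasDerivAt_const (0:ℝ) (0:ℝ)).congr_of_eventuallyEq ?_
          filter_upwards [hev] with t ht
          rw [max_eq_left (by linarith : -(g i (L t)) ≤ 0)]
        rw [hval, zero_mul, neg_zero]; exact hd'
    have hφ : HasDerivAt
        (fun t => (∑ i, |h i (L t)|) + ∑ i, max 0 (-(g i (L t))))
        ((∑ i, a i * ⟪gradient (h i) xs, d⟫) + ∑ i, -(b i * ⟪gradient (g i) xs, d⟫)) 0 :=
      (HasDerivAt.fun_sum fun i _ => hterm1 i).add (HasDerivAt.fun_sum fun i _ => hterm2 i)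
    have hLt : Filter.Tendsto L (nhds 0) (nhds xs) := by
      have hcont : Continuous L := by
        rw [hL_def]; exact continuous_const.add (continuous_id.smul continuous_const)
      have := hcont.continuousAt (x := (0:ℝ))
      simpa [ContinuousAt, hL_def] using this
    have hφmin : IsLocalMin (fun t => (∑ i, |h i (L t)|) + ∑ i, max 0 (-(g i (L t)))) 0 := by
      show ∀ᶠ t in nhds (0:ℝ), _ ≤ _
      filter_upwards [hLt.eventually hmin] with t ht
      simpa [hL_def] using ht
    have hzero := hφmin.hasDerivAt_eq_zero hφ
    rw [Finset.sum_neg_distrib] at hzero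
    linarith [hzero]
  -- membership of w in the span of the active gradients
  set V : Fin mE ⊕ Fin mI → EuclideanSpace ℝ (Fin n) :=
    Sum.elim (fun i => if h i xs = 0 then gradient (h i) xs else 0)
      (fun i => if g i xs = 0 then gradient (g i) xs else 0) with hV_def
  set w : EuclideanSpace ℝ (Fin n) :=
    (∑ i, a i • gradient (h i) xs) - ∑ i, b i • gradient (g i) xs with hw_def
  have hwmem : ∃ c : Fin mE ⊕ Fin mI → ℝ, ∑ j, c j • V j = w := by
    rw [← Submodule.mem_span_range_iff_exists_fun]
    have hmem : w ∈ (Submodule.span ℝ (Set.range V))ᗮᗮ := by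
      rw [Submodule.mem_orthogonal]
      intro d hd
      have hdh : ∀ i, h i xs = 0 → ⟪gradient (h i) xs, d⟫ = 0 := by
        intro i hi
        have := (Submodule.mem_orthogonal' _ d).mp hd (V (Sum.inl i))
          (Submodule.subset_span (Set.mem_range_self _))
        rw [hV_def] at this
        simp only [Sum.elim_inl, if_pos hi] at this
        rwa [real_inner_comm] at this
      have hdg : ∀ i, g i xs = 0 → ⟪gradient (g i) xs, d⟫ = 0 := by
        intro i hi
        have := (Submodule.mem_orthogonal' _ d).mp hd (V (Sum.inr i))
          (Submodule.subset_span (Set.mem_range_self _))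
        rw [hV_def] at this
        simp only [Sum.elim_inr, if_pos hi] at this
        rwa [real_inner_comm] at this
      have hc := claim d hdh hdg
      have : ⟪d, w⟫ = (∑ i, a i * ⟪gradient (h i) xs, d⟫)
          - ∑ i, b i * ⟪gradient (g i) xs, d⟫ := by
        rw [hw_def, inner_sub_right, inner_sum, inner_sum]
        congr 1 <;> exact Finset.sum_congr rfl fun i _ => by
          rw [real_inner_smul_right, real_inner_comm]
      rw [this, hc]
    rwa [Submodule.orthogonal_orthogonal] at hmem
  obtain ⟨c, hc⟩ := hwmem
  rw [Fintype.sum_sum_type] at hc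
  -- define the multipliers
  refine ⟨fun i => if h i xs = 0 then (v i - u i - c (Sum.inl i)) / ρ else 0,
    fun i => if g i xs = 0 then (s i - c (Sum.inr i)) / ρ else 0,
    fun i hi => if_neg hi, fun i hi => if_neg hi, ?_⟩
  have hρ' : ρ ≠ 0 := ne_of_gt hρ
  -- abbreviations
  set S1 := ∑ i, (if h i xs = 0 then u i - v i else 0) • gradient (h i) xs with hS1
  set S2 := ∑ i, a i • gradient (h i) xs with hS2
  set S3 := ∑ i, (if g i xs = 0 then s i else 0) • gradient (g i) xs with hS3
  set S4 := ∑ i, b i • gradient (g i) xs with hS4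
  set S5 := ∑ i, (if h i xs = 0 then c (Sum.inl i) else 0) • gradient (h i) xs with hS5
  set S6 := ∑ i, (if g i xs = 0 then c (Sum.inr i) else 0) • gradient (g i) xs with hS6
  have e1 : ∑ i, (u i - v i) • gradient (h i) xs = S1 + S2 := by
    rw [hS1, hS2, ← Finset.sum_add_distrib]
    refine Finset.sum_congr rfl fun i _ => ?_
    by_cases hi : h i xs = 0 <;> simp [ha_def, hi, add_smul]
  have e2 : ∑ i, s i • gradient (g i) xs = S3 + S4 := by
    rw [hS3, hS4, ← Finset.sum_add_distrib]
    refine Finset.sum_congr rfl fun i _ => ?_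
    by_cases hi : g i xs = 0 <;> simp [hb_def, hi, add_smul]
  have key : ρ • gradient f xs + S1 + S2 - S3 - S4 = 0 := by
    rw [e1, e2] at hstat
    rw [← hstat]; abel
  have weq : S2 - S4 = S5 + S6 := by
    rw [show S2 - S4 = w from rfl, ← hc]
    congr 1
    · refine Finset.sum_congr rfl fun i _ => ?_
      rw [hV_def]
      by_cases hi : h i xs = 0 <;> simp [hi]
    · refine Finset.sum_congr rfl fun i _ => ?_
      rw [hV_def]
      by_cases hi : g i xs = 0 <;> simp [hi]
  -- final algebra
  suffices hfin : ρ • (gradient f xs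
      - (∑ i, (if h i xs = 0 then (v i - u i - c (Sum.inl i)) / ρ else 0) • gradient (h i) xs)
      - (∑ i, (if g i xs = 0 then (s i - c (Sum.inr i)) / ρ else 0) • gradient (g i) xs)) = 0 by
    rcases smul_eq_zero.mp hfin with h' | h'
    · exact absurd h' hρ'
    · exact h'
  rw [smul_sub, smul_sub, Finset.smul_sum, Finset.smul_sum]
  have E3 : ∑ i, ρ • ((if h i xs = 0 then (v i - u i - c (Sum.inl i)) / ρ else 0)
      • gradient (h i) xs) = -S1 - S5 := by
    rw [hS1, hS5, ← Finset.sum_neg_distrib, ← Finset.sum_sub_distrib]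
    refine Finset.sum_congr rfl fun i _ => ?_
    rw [smul_smul, ← neg_smul, ← sub_smul]
    congr 1
    by_cases hi : h i xs = 0 <;> simp [hi] <;> field_simp <;> ring
  have E4 : ∑ i, ρ • ((if g i xs = 0 then (s i - c (Sum.inr i)) / ρ else 0)
      • gradient (g i) xs) = S3 - S6 := by
    rw [hS3, hS6, ← Finset.sum_sub_distrib]
    refine Finset.sum_congr rfl fun i _ => ?_
    rw [smul_smul, ← sub_smul]
    congr 1
    by_cases hi : g i xs = 0 <;> simp [hi] <;> field_simp <;> ring
  rw [E3, E4]
  have : ρ • gradient f xs - (-S1 - S5) - (S3 - S6)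
      = (ρ • gradient f xs + S1 + S2 - S3 - S4) - ((S2 - S4) - (S5 + S6)) := by abel
  rw [this, key, weq]
  simp
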